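/- (Berger's inequality) Let R be an algebraic curvature tensor on ℝⁿ such that δ ≤ R(X,Y,X,Y) ≤ 1 for all orthonormal pairs X, Y. Then for every orthonormal four-frame {e₁,e₂,e₃,e₄}: |R(e₁,e₂,e₃,e₄)| ≤ (2/3)(1 − δ). -/
import Mathlib


noncomputable section
open scoped BigOperators

def dotp {n : ℕ} (X Y : Fin n → ℝ) : ℝ := ∑ i, X i * Y i

def ON4 {n : ℕ} (e₁ e₂ e₃ e₄ : Fin n → ℝ) : Prop :=
  dotp e₁ e₁ = 1 ∧ dotp e₂ e₂ = 1 ∧ dotp e₃ e₃ = 1 ∧ dotp e₄ e₄ = 1 ∧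
  dotp e₁ e₂ = 0 ∧ dotp e₁ e₃ = 0 ∧ dotp e₁ e₄ = 0 ∧
  dotp e₂ e₃ = 0 ∧ dotp e₂ e₄ = 0 ∧ dotp e₃ e₄ = 0

namespace BergerAux

variable {n : ℕ}

lemma dotp_comm (X Y : Fin n → ℝ) : dotp X Y = dotp Y X := by
  unfold dotp; exact Finset.sum_congr rfl fun i _ => mul_comm _ _

lemma dotp_add_left (X Y Z : Fin n → ℝ) : dotp (X + Y) Z = dotp X Z + dotp Y Z := by
  unfold dotp; rw [← Finset.sum_add_distrib]
  exact Finset.sum_congr rfl fun i _ => by simp [add_mul]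

lemma dotp_add_right (X Y Z : Fin n → ℝ) : dotp X (Y + Z) = dotp X Y + dotp X Z := by
  rw [dotp_comm, dotp_add_left, dotp_comm Y X, dotp_comm Z X]

lemma dotp_neg_left (X Y : Fin n → ℝ) : dotp (-X) Y = - dotp X Y := by
  unfold dotp; rw [← Finset.sum_neg_distrib]
  exact Finset.sum_congr rfl fun i _ => by simp

lemma dotp_neg_right (X Y : Fin n → ℝ) : dotp X (-Y) = - dotp X Y := by
  rw [dotp_comm, dotp_neg_left, dotp_comm Y X]

lemma dotp_smul_left (c : ℝ) (X Y : Fin n → ℝ) : dotp (c • X) Y = c * dotp X Y := by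
  unfold dotp; rw [Finset.mul_sum]
  exact Finset.sum_congr rfl fun i _ => by simp [mul_assoc]

lemma dotp_smul_right (c : ℝ) (X Y : Fin n → ℝ) : dotp X (c • Y) = c * dotp X Y := by
  rw [dotp_comm, dotp_smul_left, dotp_comm Y X]

variable (R : MultilinearMap ℝ (fun _ : Fin 4 => (Fin n → ℝ)) ℝ)

lemma upd0 (a y z w x : Fin n → ℝ) :
    Function.update ![a, y, z, w] (0 : Fin 4) x = ![x, y, z, w] := by
  ext i; fin_cases i <;> simp

lemma upd1 (a y z w x : Fin n → ℝ) :
    Function.update ![y, a, z, w] (1 : Fin 4) x = ![y, x, z, w] := by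
  ext i; fin_cases i <;> simp

lemma upd2 (a y z w x : Fin n → ℝ) :
    Function.update ![y, z, a, w] (2 : Fin 4) x = ![y, z, x, w] := by
  ext i; fin_cases i <;> simp

lemma upd3 (a y z w x : Fin n → ℝ) :
    Function.update ![y, z, w, a] (3 : Fin 4) x = ![y, z, w, x] := by
  ext i; fin_cases i <;> simp

lemma Radd0 (a b y z w : Fin n → ℝ) :
    R ![a + b, y, z, w] = R ![a, y, z, w] + R ![b, y, z, w] := by
  have h := R.map_update_add ![a, y, z, w] 0 a b
  rwa [upd0, upd0, upd0] at h

lemma Radd1 (a b y z w : Fin n → ℝ) :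
    R ![y, a + b, z, w] = R ![y, a, z, w] + R ![y, b, z, w] := by
  have h := R.map_update_add ![y, a, z, w] 1 a b
  rwa [upd1, upd1, upd1] at h

lemma Radd2 (a b y z w : Fin n → ℝ) :
    R ![y, z, a + b, w] = R ![y, z, a, w] + R ![y, z, b, w] := by
  have h := R.map_update_add ![y, z, a, w] 2 a b
  rwa [upd2, upd2, upd2] at h

lemma Radd3 (a b y z w : Fin n → ℝ) :
    R ![y, z, w, a + b] = R ![y, z, w, a] + R ![y, z, w, b] := by
  have h := R.map_update_add ![y, z, w, a] 3 a b
  rwa [upd3, upd3, upd3] at h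

lemma Rsmul0 (c : ℝ) (a y z w : Fin n → ℝ) :
    R ![c • a, y, z, w] = c * R ![a, y, z, w] := by
  have h := R.map_update_smul ![a, y, z, w] 0 c a
  rwa [upd0, upd0, smul_eq_mul] at h

lemma Rsmul1 (c : ℝ) (a y z w : Fin n → ℝ) :
    R ![y, c • a, z, w] = c * R ![y, a, z, w] := by
  have h := R.map_update_smul ![y, a, z, w] 1 c a
  rwa [upd1, upd1, smul_eq_mul] at h

lemma Rsmul2 (c : ℝ) (a y z w : Fin n → ℝ) :
    R ![y, z, c • a, w] = c * R ![y, z, a, w] := by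
  have h := R.map_update_smul ![y, z, a, w] 2 c a
  rwa [upd2, upd2, smul_eq_mul] at h

lemma Rsmul3 (c : ℝ) (a y z w : Fin n → ℝ) :
    R ![y, z, w, c • a] = c * R ![y, z, w, a] := by
  have h := R.map_update_smul ![y, z, w, a] 3 c a
  rwa [upd3, upd3, smul_eq_mul] at h

lemma Rneg0 (a y z w : Fin n → ℝ) : R ![-a, y, z, w] = - R ![a, y, z, w] := by
  rw [← neg_one_smul ℝ a, Rsmul0]; ring

lemma Rneg1 (a y z w : Fin n → ℝ) : R ![y, -a, z, w] = - R ![y, a, z, w] := by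
  rw [← neg_one_smul ℝ a, Rsmul1]; ring

lemma Rneg2 (a y z w : Fin n → ℝ) : R ![y, z, -a, w] = - R ![y, z, a, w] := by
  rw [← neg_one_smul ℝ a, Rsmul2]; ring

lemma Rneg3 (a y z w : Fin n → ℝ) : R ![y, z, w, -a] = - R ![y, z, w, a] := by
  rw [← neg_one_smul ℝ a, Rsmul3]; ring

lemma expandF (x y z w : Fin n → ℝ) :
    R ![x + y, z + w, x + y, z + w] =
      R ![x, z, x, z] + R ![x, z, x, w] + R ![x, z, y, z] + R ![x, z, y, w] +
      R ![x, w, x, z] + R ![x, w, x, w] + R ![x, w, y, z] + R ![x, w, y, w] +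
      R ![y, z, x, z] + R ![y, z, x, w] + R ![y, z, y, z] + R ![y, z, y, w] +
      R ![y, w, x, z] + R ![y, w, x, w] + R ![y, w, y, z] + R ![y, w, y, w] := by
  rw [Radd0, Radd1, Radd1, Radd2, Radd2, Radd2, Radd2,
      Radd3, Radd3, Radd3, Radd3, Radd3, Radd3, Radd3, Radd3]
  ring

end BergerAux

set_option maxHeartbeats 2000000 in
open BergerAux in
theorem berger_inequality {n : ℕ} (δ : ℝ)
    (R : MultilinearMap ℝ (fun _ : Fin 4 => (Fin n → ℝ)) ℝ)
    (hanti : ∀ X Y Z W, R ![X, Y, Z, W] = - R ![Y, X, Z, W])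
    (hpair : ∀ X Y Z W, R ![X, Y, Z, W] = R ![Z, W, X, Y])
    (hbianchi : ∀ X Y Z W,
      R ![X, Y, Z, W] + R ![Y, Z, X, W] + R ![Z, X, Y, W] = 0)
    (hsec : ∀ X Y : Fin n → ℝ, dotp X X = 1 → dotp Y Y = 1 → dotp X Y = 0 →
      δ ≤ R ![X, Y, X, Y] ∧ R ![X, Y, X, Y] ≤ 1) :
    ∀ e₁ e₂ e₃ e₄ : Fin n → ℝ, ON4 e₁ e₂ e₃ e₄ →
      |R ![e₁, e₂, e₃, e₄]| ≤ (2 / 3) * (1 - δ) := by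
  -- sectional curvature bound for vectors of norm √2
  have hsec2 : ∀ u v : Fin n → ℝ, dotp u u = 2 → dotp v v = 2 → dotp u v = 0 →
      4 * δ ≤ R ![u, v, u, v] ∧ R ![u, v, u, v] ≤ 4 := by
    intro u v hu hv huv
    set c : ℝ := (Real.sqrt 2)⁻¹ with hc
    have h2 : (Real.sqrt 2) * (Real.sqrt 2) = 2 :=
      Real.mul_self_sqrt (by norm_num)
    have hs : Real.sqrt 2 ≠ 0 := by positivity
    have hcc : c * c = 1 / 2 := by
      rw [hc, ← mul_inv]; rw [h2]; norm_num
    have h1 : dotp (c • u) (c • u) = 1 := by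
      rw [dotp_smul_left, dotp_smul_right, hu, ← mul_assoc, hcc]; norm_num
    have h1' : dotp (c • v) (c • v) = 1 := by
      rw [dotp_smul_left, dotp_smul_right, hv, ← mul_assoc, hcc]; norm_num
    have h0 : dotp (c • u) (c • v) = 0 := by
      rw [dotp_smul_left, dotp_smul_right, huv]; ring
    have hR : R ![c • u, c • v, c • u, c • v] = (1 / 4) * R ![u, v, u, v] := by
      rw [Rsmul0, Rsmul1, Rsmul2, Rsmul3]
      linear_combination (c * c * R ![u, v, u, v] + R ![u, v, u, v] / 2) * hcc
    have := hsec (c • u) (c • v) h1 h1' h0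
    rw [hR] at this
    constructor <;> linarith [this.1, this.2]
  -- key polarization estimate
  have key : ∀ f₁ f₂ f₃ f₄ : Fin n → ℝ, ON4 f₁ f₂ f₃ f₄ →
      |R ![f₁, f₂, f₃, f₄] - R ![f₁, f₄, f₂, f₃]| ≤ 1 - δ := by
    intro f₁ f₂ f₃ f₄ h
    obtain ⟨h11, h22, h33, h44, h12, h13, h14, h23, h24, h34⟩ := h
    have c13 := dotp_comm f₁ f₃
    have c24 := dotp_comm f₂ f₄
    have c12 := dotp_comm f₁ f₂
    have c14 := dotp_comm f₁ f₄
    have c23 := dotp_comm f₂ f₃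
    have c34 := dotp_comm f₃ f₄
    -- dot products of combinations
    have du : ∀ s : Fin n → ℝ, s = f₃ ∨ s = -f₃ → dotp (f₁ + s) (f₁ + s) = 2 := by
      rintro s (rfl | rfl) <;>
        simp only [dotp_add_left, dotp_add_right, dotp_neg_left, dotp_neg_right] <;> linarith
    have dv : ∀ t : Fin n → ℝ, t = f₄ ∨ t = -f₄ → dotp (f₂ + t) (f₂ + t) = 2 := by
      rintro t (rfl | rfl) <;>
        simp only [dotp_add_left, dotp_add_right, dotp_neg_left, dotp_neg_right] <;> linarith
    have duv : ∀ s t : Fin n → ℝ, (s = f₃ ∨ s = -f₃) → (t = f₄ ∨ t = -f₄) →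
        dotp (f₁ + s) (f₂ + t) = 0 := by
      rintro s t (rfl | rfl) (rfl | rfl) <;>
        simp only [dotp_add_left, dotp_add_right, dotp_neg_left, dotp_neg_right] <;> linarith
    have Bpp := hsec2 (f₁ + f₃) (f₂ + f₄) (du _ (Or.inl rfl)) (dv _ (Or.inl rfl))
      (duv _ _ (Or.inl rfl) (Or.inl rfl))
    have Bpm := hsec2 (f₁ + f₃) (f₂ + -f₄) (du _ (Or.inl rfl)) (dv _ (Or.inr rfl))
      (duv _ _ (Or.inl rfl) (Or.inr rfl))
    have Bmp := hsec2 (f₁ + -f₃) (f₂ + f₄) (du _ (Or.inr rfl)) (dv _ (Or.inl rfl))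
      (duv _ _ (Or.inr rfl) (Or.inl rfl))
    have Bmm := hsec2 (f₁ + -f₃) (f₂ + -f₄) (du _ (Or.inr rfl)) (dv _ (Or.inr rfl))
      (duv _ _ (Or.inr rfl) (Or.inr rfl))
    -- the polarization identity
    have h1 : R ![f₃, f₄, f₁, f₂] = R ![f₁, f₂, f₃, f₄] := hpair f₃ f₄ f₁ f₂
    have h2 : R ![f₁, f₄, f₃, f₂] = R ![f₃, f₂, f₁, f₄] := hpair f₁ f₄ f₃ f₂
    have h3 : R ![f₃, f₂, f₁, f₄] = - R ![f₁, f₄, f₂, f₃] := by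
      rw [hanti f₃ f₂ f₁ f₄, hpair f₂ f₃ f₁ f₄]
    have comb :
        R ![f₁ + f₃, f₂ + f₄, f₁ + f₃, f₂ + f₄]
          - R ![f₁ + f₃, f₂ + -f₄, f₁ + f₃, f₂ + -f₄]
          - R ![f₁ + -f₃, f₂ + f₄, f₁ + -f₃, f₂ + f₄]
          + R ![f₁ + -f₃, f₂ + -f₄, f₁ + -f₃, f₂ + -f₄]
        = 8 * (R ![f₁, f₂, f₃, f₄] - R ![f₁, f₄, f₂, f₃]) := by
      rw [expandF, expandF, expandF, expandF]
      simp only [Rneg0, Rneg1, Rneg2, Rneg3]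
      linear_combination 4 * h1 + 4 * h2 + 8 * h3
    rw [abs_le]
    constructor <;> nlinarith [Bpp.1, Bpp.2, Bpm.1, Bpm.2, Bmp.1, Bmp.2, Bmm.1, Bmm.2]
  intro e₁ e₂ e₃ e₄ h
  obtain ⟨h11, h22, h33, h44, h12, h13, h14, h23, h24, h34⟩ := h
  set a := R ![e₁, e₂, e₃, e₄] with ha
  set b := R ![e₁, e₃, e₄, e₂] with hb
  set c := R ![e₁, e₄, e₂, e₃] with hc
  have hanti34 : ∀ X Y Z W, R ![X, Y, Z, W] = - R ![X, Y, W, Z] := by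
    intro X Y Z W
    rw [hpair X Y Z W, hanti Z W X Y, hpair W Z X Y]
  have k1 : |a - c| ≤ 1 - δ := key e₁ e₂ e₃ e₄
    ⟨h11, h22, h33, h44, h12, h13, h14, h23, h24, h34⟩
  have k2' : |R ![e₁, e₂, e₄, e₃] - R ![e₁, e₃, e₂, e₄]| ≤ 1 - δ := key e₁ e₂ e₄ e₃
    ⟨h11, h22, h44, h33, h12, h14, h13, h24, h23, by rw [dotp_comm]; exact h34⟩
  have r1 : R ![e₁, e₂, e₄, e₃] = -a := by rw [ha]; rw [hanti34 e₁ e₂ e₄ e₃]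
  have r2 : R ![e₁, e₃, e₂, e₄] = -b := by rw [hb]; rw [hanti34 e₁ e₃ e₂ e₄]
  rw [r1, r2] at k2'
  have k2 : |a - b| ≤ 1 - δ := by
    rw [show -a - -b = -(a - b) by ring, abs_neg] at k2'; exact k2'
  have hbi : a + b + c = 0 := by
    have h := hbianchi e₁ e₂ e₃ e₄
    have e1 : R ![e₂, e₃, e₁, e₄] = c := by rw [hc, hpair e₂ e₃ e₁ e₄]
    have e2 : R ![e₃, e₁, e₂, e₄] = b := by
      rw [hpair e₃ e₁ e₂ e₄, hanti34 e₂ e₄ e₃ e₁, hpair e₂ e₄ e₁ e₃,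
        hanti34 e₁ e₃ e₂ e₄, hb]; ring
    rw [e1, e2, ← ha] at h
    linarith
  rw [abs_le] at k1 k2 ⊢
  constructor <;> [nlinarith [k1.1, k2.1]; nlinarith [k1.2, k2.2]]
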